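/- Let J > 0 and J₁ > 0 be fixed, and for β > 0 set θ(β) = e^{βJ} and θ₁(β) = e^{βJ₁}. Then there exists β₀ > 0 such that for every β > β₀ the quadratic Q_β(u) = θ(β)u² + (θ₁(β)+1)(θ(β)(1−θ₁(β))+2)u + 2(θ(β)+1) has two distinct positive roots u₂*(β) < u₁*(β); these roots satisfy u₁*(β)·u₂*(β) = 2(θ(β)+1)/θ(β), and as β → ∞ one has u₁*(β) → ∞ and u₂*(β) → 0. -/

import Mathlib

open Filter

/-- for fixed couplings `J, J₁ > 0` with Boltzmann factors
`θ(β) = e^{βJ}`, `θ₁(β) = e^{βJ₁}`, beyond some `β₀ > 0` the quadratic `Q_β` has two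
distinct positive roots `u₂*(β) < u₁*(β)` with product `2(θ(β)+1)/θ(β)`, and as
`β → ∞` one has `u₁*(β) → ∞` and `u₂*(β) → 0`. -/

lemma potts_aux (t t₁ b s u₁ u₂ : ℝ) (ht : 3 ≤ t) (ht₁ : 3 ≤ t₁)
    (hbdef : b = (t₁ + 1) * (t * (1 - t₁) + 2))
    (hsdef : s = Real.sqrt (b ^ 2 - 4 * t * (2 * (t + 1))))
    (hu1def : u₁ = (-b + s) / (2 * t))
    (hu2def : u₂ = 2 * (t + 1) / (t * u₁)) :
    0 < u₂ ∧ u₂ < u₁ ∧ t * u₂ ^ 2 + b * u₂ + 2 * (t + 1) = 0 ∧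
      t * u₁ ^ 2 + b * u₁ + 2 * (t + 1) = 0 ∧ u₁ * u₂ = 2 * (t + 1) / t ∧
      t₁ - 2 ≤ u₁ ∧ u₂ ≤ 4 / (t₁ - 2) := by
  have ht0 : (0:ℝ) < t := by linarith
  have hb : b ≤ -(4 * t) := by
    nlinarith [mul_nonneg (by linarith : (0:ℝ) ≤ t - 3) (by nlinarith : (0:ℝ) ≤ t₁ ^ 2 - 9),
      mul_nonneg (by linarith : (0:ℝ) ≤ t₁ - 3) (by linarith : (0:ℝ) ≤ t₁)]
  have hD : 0 < b ^ 2 - 4 * t * (2 * (t + 1)) := by nlinarith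
  have hs : 0 < s := hsdef ▸ Real.sqrt_pos.mpr hD
  have hs2 : s ^ 2 = b ^ 2 - 4 * t * (2 * (t + 1)) := by rw [hsdef]; exact Real.sq_sqrt hD.le
  have hu₁ : 2 < u₁ := by
    rw [hu1def, lt_div_iff₀ (by positivity)]; linarith
  have hu₁0 : 0 < u₁ := by linarith
  have hQ1 : t * u₁ ^ 2 + b * u₁ + 2 * (t + 1) = 0 := by
    rw [hu1def]; field_simp; nlinarith [hs2]
  have hu₂0 : 0 < u₂ := by rw [hu2def]; positivity
  have hQ2 : t * u₂ ^ 2 + b * u₂ + 2 * (t + 1) = 0 := by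
    rw [hu2def]; field_simp
    linear_combination (2 * (t + 1)) * hQ1
  have hprod : u₁ * u₂ = 2 * (t + 1) / t := by
    rw [hu2def]; field_simp
  have hlb : t₁ - 2 ≤ u₁ := by
    rw [hu1def, le_div_iff₀ (by positivity)]; nlinarith
  have hub : u₂ ≤ 4 / (t₁ - 2) := by
    rw [hu2def, div_le_div_iff₀ (by positivity) (by linarith)]
    nlinarith [mul_le_mul_of_nonneg_left hlb (le_of_lt ht0)]
  have hlt : u₂ < u₁ := by
    have h2 : u₂ < 2 := by
      rw [hu2def, div_lt_iff₀ (by positivity)]; nlinarith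
    linarith
  exact ⟨hu₂0, hlt, hQ2, hQ1, hprod, hlb, hub⟩

theorem potts_roots_low_temperature_limit (J J₁ : ℝ) (hJ : 0 < J) (hJ₁ : 0 < J₁) :
    let θ : ℝ → ℝ := fun β => Real.exp (β * J)
    let θ₁ : ℝ → ℝ := fun β => Real.exp (β * J₁)
    let Q : ℝ → ℝ → ℝ := fun β u =>
      θ β * u ^ 2 + (θ₁ β + 1) * (θ β * (1 - θ₁ β) + 2) * u + 2 * (θ β + 1)
    ∃ β₀ > (0 : ℝ), ∃ u₁ u₂ : ℝ → ℝ,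
      (∀ β > β₀, 0 < u₂ β ∧ u₂ β < u₁ β ∧ Q β (u₂ β) = 0 ∧ Q β (u₁ β) = 0 ∧
        u₁ β * u₂ β = 2 * (θ β + 1) / θ β) ∧
      Tendsto u₁ atTop atTop ∧ Tendsto u₂ atTop (nhds 0) := by
  intro θ θ₁ Q
  have hl3 : 0 < Real.log 3 := Real.log_pos (by norm_num)
  set β₀ : ℝ := Real.log 3 / J + Real.log 3 / J₁ with hβ₀def
  have hβ₀ : 0 < β₀ := by positivity
  have hth : ∀ β > β₀, 3 ≤ θ β ∧ 3 ≤ θ₁ β := by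
    intro β hβ
    rw [hβ₀def] at hβ
    have h1 : Real.log 3 / J < β := by
      have : 0 < Real.log 3 / J₁ := by positivity
      linarith
    have h2 : Real.log 3 / J₁ < β := by
      have : 0 < Real.log 3 / J := by positivity
      linarith
    constructor
    · calc (3:ℝ) = Real.exp (Real.log 3) := (Real.exp_log (by norm_num)).symm
        _ ≤ θ β := Real.exp_le_exp.mpr (le_of_lt ((div_lt_iff₀ hJ).mp h1))
    · calc (3:ℝ) = Real.exp (Real.log 3) := (Real.exp_log (by norm_num)).symm
        _ ≤ θ₁ β := Real.exp_le_exp.mpr (le_of_lt ((div_lt_iff₀ hJ₁).mp h2))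
  set b : ℝ → ℝ := fun β => (θ₁ β + 1) * (θ β * (1 - θ₁ β) + 2) with hbdef
  set u₁ : ℝ → ℝ := fun β =>
    (-b β + Real.sqrt (b β ^ 2 - 4 * θ β * (2 * (θ β + 1)))) / (2 * θ β) with hu1
  set u₂ : ℝ → ℝ := fun β => 2 * (θ β + 1) / (θ β * u₁ β) with hu2
  have key : ∀ β > β₀, 0 < u₂ β ∧ u₂ β < u₁ β ∧
      θ β * u₂ β ^ 2 + b β * u₂ β + 2 * (θ β + 1) = 0 ∧
      θ β * u₁ β ^ 2 + b β * u₁ β + 2 * (θ β + 1) = 0 ∧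
      u₁ β * u₂ β = 2 * (θ β + 1) / θ β ∧
      θ₁ β - 2 ≤ u₁ β ∧ u₂ β ≤ 4 / (θ₁ β - 2) := by
    intro β hβ
    obtain ⟨ht, ht₁⟩ := hth β hβ
    exact potts_aux (θ β) (θ₁ β) (b β) _ (u₁ β) (u₂ β) ht ht₁ rfl rfl rfl rfl
  refine ⟨β₀, hβ₀, u₁, u₂, ?_, ?_, ?_⟩
  · intro β hβ
    obtain ⟨h1, h2, h3, h4, h5, _, _⟩ := key β hβ
    exact ⟨h1, h2, h3, h4, h5⟩
  · have hlim : Tendsto (fun β => θ₁ β - 2) atTop atTop := by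
      have h0 : Tendsto (fun β : ℝ => β * J₁) atTop atTop :=
        Tendsto.atTop_mul_const hJ₁ tendsto_id
      have h1 : Tendsto θ₁ atTop atTop := Real.tendsto_exp_atTop.comp h0
      simpa [sub_eq_add_neg] using tendsto_atTop_add_const_right atTop (-2 : ℝ) h1
    refine tendsto_atTop_mono' atTop ?_ hlim
    filter_upwards [eventually_gt_atTop β₀] with β hβ
    exact (key β hβ).2.2.2.2.2.1
  · have h0 : Tendsto (fun β : ℝ => β * J₁) atTop atTop :=
      Tendsto.atTop_mul_const hJ₁ tendsto_id
    have h1 : Tendsto θ₁ atTop atTop := Real.tendsto_exp_atTop.comp h0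
    have hlim : Tendsto (fun β => θ₁ β - 2) atTop atTop := by
      simpa [sub_eq_add_neg] using tendsto_atTop_add_const_right atTop (-2 : ℝ) h1
    have h2 : Tendsto (fun β => 4 / (θ₁ β - 2)) atTop (nhds 0) :=
      Tendsto.div_atTop tendsto_const_nhds hlim
    refine tendsto_of_tendsto_of_tendsto_of_le_of_le' tendsto_const_nhds h2 ?_ ?_
    · filter_upwards [eventually_gt_atTop β₀] with β hβ
      exact (key β hβ).1.le
    · filter_upwards [eventually_gt_atTop β₀] with β hβ
      exact (key β hβ).2.2.2.2.2.2
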